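/- Let C_2 ⊆ C_1 ⊆ F_q^n be nested linear codes with ℓ = dim C_1 − dim C_2 ≥ 1, and let 1 ≤ m ≤ ℓ. If A ⊆ {1,...,n} satisfies #A < M_m(C_2^⊥, C_1^⊥), then dim (C_2^⊥)_A − dim (C_1^⊥)_A ≤ m − 1; moreover there exists a set A of size exactly M_m(C_2^⊥, C_1^⊥) with dim (C_2^⊥)_A − dim (C_1^⊥)_A ≥ m. In the associated ramp scheme this establishes the privacy number t_m = M_m(C_2^⊥, C_1^⊥) − 1. -/

import Mathlib

open Classical

noncomputable def projMap (F : Type*) [Field F] {n : ℕ} (A : Finset (Fin n)) :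
    (Fin n → F) →ₗ[F] (Fin n → F) where
  toFun x := fun i => if i ∈ A then x i else 0
  map_add' x y := by
    funext i; by_cases h : i ∈ A <;> simp [h]
  map_smul' c x := by
    funext i; by_cases h : i ∈ A <;> simp [h]

def zeroOutside (F : Type*) [Field F] {n : ℕ} (A : Finset (Fin n)) :
    Submodule F (Fin n → F) where
  carrier := {x | ∀ i, i ∉ A → x i = 0}
  add_mem' := by
    intro x y hx hy i hi
    simp only [Pi.add_apply]
    simp [hx i hi, hy i hi]
  zero_mem' := fun i _ => rfl
  smul_mem' := by
    intro c x hx i hi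
    simp [hx i hi]

def dualCode {F : Type*} [Field F] {n : ℕ} (C : Submodule F (Fin n → F)) :
    Submodule F (Fin n → F) where
  carrier := {x | ∀ c ∈ C, ∑ i, x i * c i = 0}
  add_mem' := by
    intro x y hx hy c hc
    simp [add_mul, Finset.sum_add_distrib, hx c hc, hy c hc]
  zero_mem' := by intro c hc; simp
  smul_mem' := by
    intro a x hx c hc
    simp [smul_eq_mul, mul_assoc, ← Finset.mul_sum, hx c hc]

def suppSet {F : Type*} [Field F] {n : ℕ} (D : Submodule F (Fin n → F)) : Set (Fin n) :=
  {i | ∃ x ∈ D, x i ≠ 0}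

noncomputable def rghw {F : Type*} [Field F] {n : ℕ}
    (C1 C2 : Submodule F (Fin n → F)) (t : ℕ) : ℕ :=
  sInf {w | ∃ D : Submodule F (Fin n → F), D ≤ C1 ∧ D ⊓ C2 = ⊥ ∧
    Module.finrank F ↥D = t ∧ (suppSet D).ncard = w}

noncomputable def minDist {F : Type*} [Field F] {n : ℕ} (C : Submodule F (Fin n → F)) : ℕ :=
  sInf {w | ∃ c ∈ C, c ≠ (0 : Fin n → F) ∧ ({i | c i ≠ 0} : Set (Fin n)).ncard = w}

section Aux

open Module

variable {F : Type*} [Field F] {n : ℕ}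

noncomputable def dotForm (F : Type*) [Field F] (n : ℕ) : LinearMap.BilinForm F (Fin n → F) :=
  LinearMap.mk₂ F (fun x y => ∑ i, x i * y i)
    (by intro x y z; simp [add_mul, Finset.sum_add_distrib])
    (by intro c x y; simp [Finset.mul_sum, mul_assoc])
    (by intro x y z; simp [mul_add, Finset.sum_add_distrib])
    (by intro c x y; simp [Finset.mul_sum, mul_left_comm])

lemma dotForm_apply (x y : Fin n → F) : dotForm F n x y = ∑ i, x i * y i := rfl

lemma dotForm_refl : (dotForm F n).IsRefl := by
  intro x y hxy
  simpa [dotForm_apply, mul_comm] using hxy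

lemma dotForm_nondeg : (dotForm F n).Nondegenerate := by
  constructor
  · intro x hx
    funext i
    simpa [dotForm_apply, Pi.single_apply, Finset.sum_ite_eq] using hx (Pi.single i 1)
  · intro x hx
    funext i
    simpa [dotForm_apply, Pi.single_apply, Finset.sum_ite_eq, Finset.sum_ite_eq'] using
      hx (Pi.single i 1)

lemma dualCode_eq_orthogonal (C : Submodule F (Fin n → F)) :
    dualCode C = (dotForm F n).orthogonal C := by
  ext x
  simp only [LinearMap.BilinForm.mem_orthogonal_iff]
  constructor
  · intro hx c hc
    simpa [LinearMap.BilinForm.IsOrtho, dotForm_apply, mul_comm] using hx c hc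
  · intro hx c hc
    simpa [LinearMap.BilinForm.IsOrtho, dotForm_apply, mul_comm] using hx c hc

lemma finrank_dualCode (C : Submodule F (Fin n → F)) :
    finrank F (dualCode C) = n - finrank F C := by
  rw [dualCode_eq_orthogonal,
    LinearMap.BilinForm.finrank_orthogonal dotForm_nondeg]
  simp

lemma dualCode_anti {C C' : Submodule F (Fin n → F)} (h : C ≤ C') :
    dualCode C' ≤ dualCode C := fun x hx c hc => hx c (h hc)

/-- In a f.d. space, any submodule contains a submodule of any smaller finrank. -/
lemma exists_le_finrank_eq {V : Type*} [AddCommGroup V] [Module F V]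
    [FiniteDimensional F V] (W : Submodule F V) (m : ℕ) (hm : m ≤ finrank F W) :
    ∃ D : Submodule F V, D ≤ W ∧ finrank F D = m := by
  classical
  let b := finBasis F W
  set v : Fin m → V := fun i => (b (Fin.castLE hm i) : V) with hv
  have hli : LinearIndependent F v := by
    have h1 : LinearIndependent F (fun i : Fin (finrank F W) => (b i : V)) :=
      b.linearIndependent.map' W.subtype W.ker_subtype
    exact h1.comp (Fin.castLE hm) (Fin.castLE_injective hm)
  refine ⟨Submodule.span F (Set.range v), ?_, ?_⟩
  · rw [Submodule.span_le]
    rintro _ ⟨i, rfl⟩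
    exact (b (Fin.castLE hm i)).2
  · rw [finrank_span_eq_card hli, Fintype.card_fin]

/-- Relative complement with finrank. -/
lemma exists_relcompl {V : Type*} [AddCommGroup V] [Module F V]
    [FiniteDimensional F V] (S T : Submodule F V) (hST : S ≤ T) :
    ∃ D : Submodule F V, D ≤ T ∧ D ⊓ S = ⊥ ∧
      finrank F D + finrank F S = finrank F T := by
  classical
  set p : Submodule F T := S.comap T.subtype with hp
  obtain ⟨q, hq⟩ := p.exists_isCompl
  refine ⟨q.map T.subtype, Submodule.map_subtype_le _ _, ?_, ?_⟩
  · have hS : p.map T.subtype = S := by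
      rw [hp, Submodule.map_comap_subtype, inf_eq_right.2 hST]
    rw [← hS, ← Submodule.map_inf _ (Submodule.injective_subtype T), hq.symm.inf_eq_bot,
      Submodule.map_bot]
  · have hS : p.map T.subtype = S := by
      rw [hp, Submodule.map_comap_subtype, inf_eq_right.2 hST]
    rw [Submodule.finrank_map_subtype_eq, ← hS, Submodule.finrank_map_subtype_eq,
      Submodule.finrank_add_eq_of_isCompl hq.symm]

end Aux

open Module

theorem privacy_numbers {F : Type*} [Field F] {n : ℕ}
    (C1 C2 : Submodule F (Fin n → F)) (h : C2 ≤ C1)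
    (ℓ : ℕ) (hℓ : ℓ = Module.finrank F ↥C1 - Module.finrank F ↥C2) (hℓ1 : 1 ≤ ℓ)
    (m : ℕ) (hm1 : 1 ≤ m) (hm2 : m ≤ ℓ) :
    (∀ A : Finset (Fin n), A.card < rghw (dualCode C2) (dualCode C1) m →
      Module.finrank F ↥(dualCode C2 ⊓ zeroOutside F A)
        - Module.finrank F ↥(dualCode C1 ⊓ zeroOutside F A) ≤ m - 1) ∧
    (∃ A : Finset (Fin n), A.card = rghw (dualCode C2) (dualCode C1) m ∧
      m ≤ Module.finrank F ↥(dualCode C2 ⊓ zeroOutside F A)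
        - Module.finrank F ↥(dualCode C1 ⊓ zeroOutside F A)) := by
  classical
  set Cd1 := dualCode C1 with hCd1
  set Cd2 := dualCode C2 with hCd2
  have hd : Cd1 ≤ Cd2 := dualCode_anti h
  -- dimension of the dual pair
  have hC1n : finrank F C1 ≤ n := by
    simpa using Submodule.finrank_le C1
  have hC21 : finrank F C2 ≤ finrank F C1 := Submodule.finrank_mono h
  have hr2 : finrank F Cd2 = n - finrank F C2 := finrank_dualCode C2
  have hr1 : finrank F Cd1 = n - finrank F C1 := finrank_dualCode C1
  have hmr : finrank F Cd1 + m ≤ finrank F Cd2 := by omega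
  -- the set defining rghw is nonempty
  have hW : ∃ w, w ∈ {w | ∃ D : Submodule F (Fin n → F), D ≤ Cd2 ∧ D ⊓ Cd1 = ⊥ ∧
      finrank F D = m ∧ (suppSet D).ncard = w} := by
    obtain ⟨D0, hD0T, hD0i, hD0r⟩ := exists_relcompl Cd1 Cd2 hd
    obtain ⟨D, hDle, hDr⟩ := exists_le_finrank_eq D0 m (by omega)
    refine ⟨(suppSet D).ncard, D, hDle.trans hD0T, ?_, hDr, rfl⟩
    rw [← le_bot_iff, ← hD0i]
    exact inf_le_inf_right _ hDle
  have hWmem := Nat.sInf_mem hW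
  constructor
  · intro A hA
    by_contra hcon
    push_neg at hcon
    set S := Cd1 ⊓ zeroOutside F A with hS
    set T := Cd2 ⊓ zeroOutside F A with hT
    have hSTle : S ≤ T := inf_le_inf_right _ hd
    have hST : finrank F S ≤ finrank F T := Submodule.finrank_mono hSTle
    obtain ⟨D0, hD0T, hD0i, hD0r⟩ := exists_relcompl S T hSTle
    obtain ⟨D, hDle, hDr⟩ := exists_le_finrank_eq D0 m (by omega)
    have hDT : D ≤ T := hDle.trans hD0T
    have hDZ : D ≤ zeroOutside F A := hDT.trans inf_le_right
    have hDC : D ≤ Cd2 := hDT.trans inf_le_left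
    have hDi : D ⊓ Cd1 = ⊥ := by
      rw [← le_bot_iff, ← hD0i]
      intro x hx
      exact ⟨hDle hx.1, hx.2, hDZ hx.1⟩
    have hsupp : suppSet D ⊆ (A : Set (Fin n)) := by
      rintro i ⟨x, hx, hxi⟩
      by_contra hiA
      exact hxi (hDZ hx i hiA)
    have hle : rghw Cd2 Cd1 m ≤ (suppSet D).ncard :=
      Nat.sInf_le ⟨D, hDC, hDi, hDr, rfl⟩
    have : (suppSet D).ncard ≤ A.card := by
      rw [← Set.ncard_coe_finset A]
      exact Set.ncard_le_ncard hsupp (A : Set (Fin n)).toFinite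
    omega
  · obtain ⟨D, hDC, hDi, hDr, hDw⟩ := hWmem
    set A := (suppSet D).toFinset with hA
    have hAcard : A.card = rghw Cd2 Cd1 m := by
      rw [hA, ← Set.ncard_eq_toFinset_card', hDw]
      rfl
    have hDZ : D ≤ zeroOutside F A := by
      intro x hx i hi
      by_contra hxi
      exact hi (Set.mem_toFinset.2 ⟨x, hx, hxi⟩)
    refine ⟨A, hAcard, ?_⟩
    set S := Cd1 ⊓ zeroOutside F A with hS
    set T := Cd2 ⊓ zeroOutside F A with hT
    have hDT : D ≤ T := le_inf hDC hDZ
    have hsub : S ⊔ D ≤ T := sup_le (inf_le_inf_right _ hd) hDT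
    have hSD : S ⊓ D = ⊥ := by
      rw [← le_bot_iff, ← hDi]
      intro x hx
      exact ⟨hx.2, hx.1.1⟩
    have heq := Submodule.finrank_sup_add_finrank_inf_eq S D
    rw [hSD, finrank_bot, add_zero] at heq
    have h1 : finrank F ↥(S ⊔ D) ≤ finrank F T := Submodule.finrank_mono hsub
    have h2 : finrank F S ≤ finrank F ↥(S ⊔ D) := Submodule.finrank_mono le_sup_left
    omega
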